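/- For all integers p, n with 1 ≤ p ≤ n − 1, every ordered p-tuple (w_1, …, w_p) of {±1}-vectors in R^n whose real linear span contains a {±1}-vector different from ±w_1, …, ±w_p either has linearly dependent vectors w_1, …, w_p (i.e., the corresponding p×n matrix has rank less than p), or the corresponding p×n matrix belongs to M_m(p,n) for some m with 3 ≤ m ≤ p. -/

import Mathlib

open scoped Classical

noncomputable section

/-- The `{±1}`-vector in `ℝ^n` encoded by a Boolean vector. -/
def signVec {n : ℕ} (u : Fin n → Bool) : Fin n → ℝ := fun i => if u i then 1 else -1

/-- `v` is a `{±1}`-vector: all coordinates lie in `{-1, 1}`. -/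
def IsPM {n : ℕ} (v : Fin n → ℝ) : Prop := ∀ i, v i = 1 ∨ v i = -1

/-- The real span of the `{±1}`-vectors encoded by `W` contains a `{±1}`-vector different
from `±(W j)` for all `j`. -/
def KSOEvent {p n : ℕ} (W : Fin p → Fin n → Bool) : Prop :=
  ∃ x : Fin n → ℝ,
    x ∈ Submodule.span ℝ (Set.range fun j => signVec (W j)) ∧ IsPM x ∧
    ∀ j, x ≠ signVec (W j) ∧ x ≠ -signVec (W j)

/-- `ℙ(p, n)`: the probability that the real span of `p` uniformly random `{±1}`-vectors
in `ℝ^n` contains a `{±1}`-vector different from `±v_1, …, ±v_p`. -/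
def probKSO (p n : ℕ) : ℝ :=
  ((Finset.univ.filter fun W : Fin p → Fin n → Bool => KSOEvent W).card : ℝ) / 2 ^ (p * n)

/-- Some three of the vectors encoded by `W` have a real linear combination that is a
`{±1}`-vector different from `±` those three vectors. -/
def P3Event {p n : ℕ} (W : Fin p → Fin n → Bool) : Prop :=
  ∃ j₁ j₂ j₃ : Fin p, j₁ ≠ j₂ ∧ j₁ ≠ j₃ ∧ j₂ ≠ j₃ ∧
    ∃ a b c : ℝ, ∃ x : Fin n → ℝ,
      x = a • signVec (W j₁) + b • signVec (W j₂) + c • signVec (W j₃) ∧ IsPM x ∧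
      (x ≠ signVec (W j₁) ∧ x ≠ -signVec (W j₁)) ∧
      (x ≠ signVec (W j₂) ∧ x ≠ -signVec (W j₂)) ∧
      (x ≠ signVec (W j₃) ∧ x ≠ -signVec (W j₃))

/-- `ℙ₃(p, n)`: the probability of `P3Event` for `p` uniformly random `{±1}`-vectors in `ℝ^n`. -/
def probP3 (p n : ℕ) : ℝ :=
  ((Finset.univ.filter fun W : Fin p → Fin n → Bool => P3Event W).card : ℝ) / 2 ^ (p * n)

/-- Some `m` of the vectors encoded by `W` have a linear combination with all coefficients
nonzero that is a `{±1}`-vector. -/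
def PmEvent (m : ℕ) {p n : ℕ} (W : Fin p → Fin n → Bool) : Prop :=
  ∃ j : Fin m → Fin p, Function.Injective j ∧
    ∃ α : Fin m → ℝ, (∀ i, α i ≠ 0) ∧ IsPM (∑ i, α i • signVec (W (j i)))

/-- `ℙ_m(p, n)`: the probability of `PmEvent m` for `p` uniformly random `{±1}`-vectors
in `ℝ^n`. -/
def probPm (m p n : ℕ) : ℝ :=
  ((Finset.univ.filter fun W : Fin p → Fin n → Bool => PmEvent m W).card : ℝ) / 2 ^ (p * n)

/-- `𝓜_m(p, n)`: the set of `p × n` `{±1}`-matrices (encoded row-wise by Booleans) with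
linearly independent rows, some `m` of which have a linear combination with nonzero
coefficients that is a `{±1}`-vector. -/
def MmSet (m p n : ℕ) : Finset (Fin p → Fin n → Bool) :=
  Finset.univ.filter fun M =>
    (LinearIndependent ℝ fun i => signVec (M i)) ∧ PmEvent m M

/-- `R_m(p, n) = |𝓜_m(p, n)| / 2^(p n)`. -/
def Rm (m p n : ℕ) : ℝ := ((MmSet m p n).card : ℝ) / 2 ^ (p * n)

/-- `ℙ_{p,n}`: the probability that a uniformly random `p × n` `{±1}`-matrix has rank
less than `p`, i.e. its rows are linearly dependent over `ℝ`. -/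
def probSingular (p n : ℕ) : ℝ :=
  ((Finset.univ.filter fun M : Fin p → Fin n → Bool =>
      ¬ LinearIndependent ℝ fun i => signVec (M i)).card : ℝ) / 2 ^ (p * n)

/-- The vector `(1, b_1, …, b_n) ∈ E_n ⊂ ℝ^{n+1}` encoded by a Boolean vector. -/
def eVec {n : ℕ} (u : Fin n → Bool) : Fin (n + 1) → ℝ := Fin.cons 1 (signVec u)

/-- The number of ordered `n`-tuples of distinct, linearly independent vectors from `E_n`
whose real span contains a `{±1}`-vector of `ℝ^{n+1}` different from `±w_1, …, ±w_n`. -/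
def KSOECard (n : ℕ) : ℕ :=
  (Finset.univ.filter fun W : Fin n → (Fin n → Bool) =>
    Function.Injective W ∧ (LinearIndependent ℝ fun i => eVec (W i)) ∧
    ∃ x : Fin (n + 1) → ℝ,
      x ∈ Submodule.span ℝ (Set.range fun i => eVec (W i)) ∧ IsPM x ∧
      ∀ i, x ≠ eVec (W i) ∧ x ≠ -eVec (W i)).card

/-- `P(2, n)`: the number of threshold functions of `n` variables. -/
def numThreshold (n : ℕ) : ℕ :=
  (Finset.univ.filter fun f : (Fin n → Bool) → Bool =>
    ∃ a : ℝ, ∃ w : Fin n → ℝ,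
      ∀ x, f x = true ↔ 0 < a + ∑ i, w i * signVec x i).card

/-- for `1 ≤ p ≤ n - 1`, every ordered `p`-tuple of `{±1}`-vectors whose
real span contains a `{±1}`-vector different from `±w_1, …, ±w_p` either has linearly
dependent rows or belongs to `𝓜_m(p,n)` for some `3 ≤ m ≤ p`. -/
theorem stmt15 (p n : ℕ) (h1 : 1 ≤ p) (h2 : p + 1 ≤ n)
    (W : Fin p → Fin n → Bool) (hW : KSOEvent W) :
    (¬ LinearIndependent ℝ fun i => signVec (W i)) ∨
      ∃ m : ℕ, 3 ≤ m ∧ m ≤ p ∧ W ∈ MmSet m p n := by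
  by_cases hLI : LinearIndependent ℝ fun i => signVec (W i)
  swap
  · exact Or.inl hLI
  right
  obtain ⟨x, hx_mem, hx_pm, hx_ne⟩ := hW
  obtain ⟨c, hc⟩ := (Submodule.mem_span_range_iff_exists_fun ℝ).mp hx_mem
  have pmW : ∀ i j, signVec (W i) j = 1 ∨ signVec (W i) j = -1 := by
    intro i j
    unfold signVec
    by_cases h : W i j <;> simp [h]
  set S : Finset (Fin p) := Finset.univ.filter (fun i => c i ≠ 0) with hSdef
  have hmemS : ∀ i, i ∈ S ↔ c i ≠ 0 := by
    intro i; simp [hSdef]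
  -- x equals the sum over S
  have hxS : ∑ i ∈ S, c i • signVec (W i) = x := by
    rw [← hc]
    exact Finset.sum_subset (Finset.subset_univ S) (fun i _ hi => by
      have : c i = 0 := by
        by_contra h
        exact hi ((hmemS i).mpr h)
      simp [this])
  -- x j coordinates
  have hn0 : 0 < n := by omega
  -- three ≤ card via ruling out 0,1,2
  have h3 : 3 ≤ S.card := by
    by_contra hlt
    push_neg at hlt
    interval_cases hcard : S.card
    · -- card 0 : x = 0
      have hSe : S = ∅ := Finset.card_eq_zero.mp hcard
      have : x = 0 := by rw [← hxS, hSe]; simp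
      rcases hx_pm ⟨0, hn0⟩ with h | h <;> rw [this] at h <;> norm_num at h
    · -- card 1
      obtain ⟨a, hSa⟩ := Finset.card_eq_one.mp hcard
      have hx1 : x = c a • signVec (W a) := by rw [← hxS, hSa]; simp
      have hca : c a = 1 ∨ c a = -1 := by
        have h1 := hx_pm ⟨0, hn0⟩
        have h2 := pmW a ⟨0, hn0⟩
        have h3 : x ⟨0, hn0⟩ = c a * signVec (W a) ⟨0, hn0⟩ := by rw [hx1]; simp
        rcases h1 with h1 | h1 <;> rcases h2 with h2 | h2 <;>
          rw [h1, h2] at h3 <;> [left; right; right; left] <;> linarith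
      rcases hca with h | h
      · exact (hx_ne a).1 (by rw [hx1, h, one_smul])
      · exact (hx_ne a).2 (by rw [hx1, h]; funext j; simp)
    · -- card 2
      obtain ⟨a, b, hab, hSab⟩ := Finset.card_eq_two.mp hcard
      have hca : c a ≠ 0 := (hmemS a).mp (by rw [hSab]; simp)
      have hcb : c b ≠ 0 := (hmemS b).mp (by rw [hSab]; simp)
      have hx2 : x = c a • signVec (W a) + c b • signVec (W b) := by
        rw [← hxS, hSab, Finset.sum_pair hab]
      have hxj : ∀ j, x j = c a * signVec (W a) j + c b * signVec (W b) j := by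
        intro j; rw [hx2]; simp
      -- the two vectors differ somewhere
      have hne1 : signVec (W a) ≠ signVec (W b) := by
        intro h
        exact hab (hLI.injective h)
      -- and are not negatives
      have hne2 : signVec (W a) ≠ -signVec (W b) := by
        intro h
        have hsum : ∑ i, (if i = a then (1:ℝ) else if i = b then 1 else 0) • signVec (W i) = 0 := by
          rw [← Finset.sum_subset (Finset.subset_univ {a, b})
            (f := fun i => (if i = a then (1:ℝ) else if i = b then 1 else 0) • signVec (W i))
            (fun i _ hi => by
              simp only [Finset.mem_insert, Finset.mem_singleton, not_or] at hi
              simp [hi.1, hi.2])]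
          rw [Finset.sum_pair hab]
          simp [hab, Ne.symm hab, h]
        have := Fintype.linearIndependent_iff.mp hLI _ hsum a
        simp at this
      obtain ⟨j1, hj1⟩ := Function.ne_iff.mp hne1
      obtain ⟨j2, hj2⟩ := Function.ne_iff.mp hne2
      -- at j1 signs are opposite
      have hopp : signVec (W b) j1 = -signVec (W a) j1 := by
        rcases pmW a j1 with h | h <;> rcases pmW b j1 with h' | h' <;>
          rw [h, h'] <;> rw [h, h'] at hj1 <;> norm_num at hj1 <;> norm_num
      have heq : signVec (W b) j2 = signVec (W a) j2 := by
        have hj2' : signVec (W a) j2 ≠ -signVec (W b) j2 := fun h => hj2 (by simp [h])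
        rcases pmW a j2 with h | h <;> rcases pmW b j2 with h' | h' <;>
          rw [h, h'] <;> rw [h, h'] at hj2' <;> norm_num at hj2' <;> norm_num
      have e1 : x j1 = (c a - c b) * signVec (W a) j1 := by rw [hxj j1, hopp]; ring
      have e2 : x j2 = (c a + c b) * signVec (W a) j2 := by rw [hxj j2, heq]; ring
      have s1 : c a - c b = 1 ∨ c a - c b = -1 := by
        rcases hx_pm j1 with h | h <;> rcases pmW a j1 with h' | h' <;>
          rw [h, h'] at e1 <;> [left; right; right; left] <;> linarith
      have s2 : c a + c b = 1 ∨ c a + c b = -1 := by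
        rcases hx_pm j2 with h | h <;> rcases pmW a j2 with h' | h' <;>
          rw [h, h'] at e2 <;> [left; right; right; left] <;> linarith
      rcases s1 with h | h <;> rcases s2 with h' | h'
      · exact hcb (by linarith)
      · exact hca (by linarith)
      · exact hca (by linarith)
      · exact hcb (by linarith)
  refine ⟨S.card, h3, ?_, ?_⟩
  · calc S.card ≤ Finset.univ.card := Finset.card_le_univ S
      _ = p := by simp
  · rw [MmSet, Finset.mem_filter]
    refine ⟨Finset.mem_univ _, hLI, ?_⟩
    set e := S.orderIsoOfFin rfl with he
    refine ⟨fun i => (e i : Fin p), ?_, fun i => c (e i : Fin p), ?_, ?_⟩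
    · intro i j hij
      exact e.injective (Subtype.ext hij)
    · intro i
      exact (hmemS _).mp (e i).2
    · have : ∑ i, c (e i : Fin p) • signVec (W (e i : Fin p)) = x := by
        rw [← hxS]
        rw [← Finset.sum_attach S (fun i => c i • signVec (W i))]
        exact Fintype.sum_equiv e.toEquiv _ _ (fun i => rfl)
      rw [this]
      exact hx_pm
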